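/- For a cut-and-projection method satisfying the standard assumptions, there exists M ∈ ℕ such that for all n ∈ ℕ and all n-regular x, the number of centers of the patch A(x,n), that is #{y ∈ Ã(x,n) : A(x,n) = A(y,n)}, is at most M. Consequently there exists λ > 0 with λ·p_pt(n) ≤ p(n) ≤ p_pt(n) for all n, where p and p_pt are the complexity and pointed complexity functions. -/

import Mathlib

open Pointwise

/-- The 1-norm on `ℝ^N`. -/
noncomputable def oneNorm {N : ℕ} (x : Fin N → ℝ) : ℝ := ∑ i, |x i|

/-- The lattice `ℤ^N` inside `ℝ^N`. -/
def intLattice (N : ℕ) : Set (Fin N → ℝ) :=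
  Set.range (fun m : Fin N → ℤ => fun i => ((m i : ℝ)))

/-- The lifted patch of size `n` with seed `x`: `Ã(x,n) = (x + ℤ^N) ∩ B(x,n) ∩ S`. -/
def liftedPatch {N : ℕ} (S : Set (Fin N → ℝ)) (n : ℕ) (x : Fin N → ℝ) :
    Set (Fin N → ℝ) :=
  {y | y - x ∈ intLattice N ∧ oneNorm (y - x) ≤ n ∧ y ∈ S}

/-- The set of (pointed) patches of size `n` with seed in `K ∩ Reg_n`; since seeds in
`K` project to `0 ∈ E`, pointed patches are identified with their underlying sets. -/
def patchSet {N : ℕ} (π : (Fin N → ℝ) →ₗ[ℝ] (Fin N → ℝ))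
    (S K : Set (Fin N → ℝ)) (Reg : ℕ → Set (Fin N → ℝ)) (n : ℕ) :
    Set (Set (Fin N → ℝ)) :=
  {P | ∃ x ∈ K ∩ Reg n, P = π '' liftedPatch S n x}

lemma oneNorm_nonneg {N : ℕ} (v : Fin N → ℝ) : 0 ≤ oneNorm v :=
  Finset.sum_nonneg fun i _ => abs_nonneg _

lemma oneNorm_add_le {N : ℕ} (v w : Fin N → ℝ) :
    oneNorm (v + w) ≤ oneNorm v + oneNorm w := by
  rw [oneNorm, oneNorm, oneNorm, ← Finset.sum_add_distrib]
  exact Finset.sum_le_sum fun i _ => abs_add_le _ _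

lemma oneNorm_neg {N : ℕ} (v : Fin N → ℝ) : oneNorm (-v) = oneNorm v := by
  simp [oneNorm]

lemma oneNorm_smul {N : ℕ} (r : ℝ) (v : Fin N → ℝ) :
    oneNorm (r • v) = |r| * oneNorm v := by
  simp [oneNorm, Finset.mul_sum, abs_mul]

lemma abs_apply_le_oneNorm {N : ℕ} (v : Fin N → ℝ) (i : Fin N) :
    |v i| ≤ oneNorm v :=
  Finset.single_le_sum (fun j _ => abs_nonneg (v j)) (Finset.mem_univ i)

lemma oneNorm_le_card_norm {N : ℕ} (v : Fin N → ℝ) : oneNorm v ≤ N * ‖v‖ := by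
  have : ∀ i ∈ Finset.univ, |v i| ≤ ‖v‖ := fun i _ => by
    rw [← Real.norm_eq_abs]; exact norm_le_pi_norm v i
  calc oneNorm v ≤ (Finset.univ : Finset (Fin N)).card • ‖v‖ :=
        Finset.sum_le_card_nsmul _ _ _ this
    _ = N * ‖v‖ := by simp [nsmul_eq_mul]

lemma oneNorm_sub_le {N : ℕ} (v w : Fin N → ℝ) :
    oneNorm (v - w) ≤ oneNorm v + oneNorm w := by
  rw [sub_eq_add_neg]
  exact le_trans (oneNorm_add_le v (-w)) (by rw [oneNorm_neg])

lemma intLattice_zero {N : ℕ} : (0 : Fin N → ℝ) ∈ intLattice N :=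
  ⟨0, by funext i; simp⟩

lemma intLattice_add {N : ℕ} {v w : Fin N → ℝ} (hv : v ∈ intLattice N)
    (hw : w ∈ intLattice N) : v + w ∈ intLattice N := by
  obtain ⟨m, rfl⟩ := hv; obtain ⟨m', rfl⟩ := hw
  exact ⟨m + m', by funext i; simp⟩

open Classical in
noncomputable def latCoord {N : ℕ} (z : Fin N → ℝ) : Fin N → ℤ :=
  if h : ∃ m : Fin N → ℤ, (fun i => ((m i : ℝ))) = z then h.choose else 0

lemma latCoord_spec {N : ℕ} {z : Fin N → ℝ} (h : z ∈ intLattice N) :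
    (fun i => ((latCoord z i : ℝ))) = z := by
  obtain ⟨m, hm⟩ := h
  have h' : ∃ m : Fin N → ℤ, (fun i => ((m i : ℝ))) = z := ⟨m, hm⟩
  simp only [latCoord, dif_pos h']
  exact h'.choose_spec

def clampInt (B v : ℤ) : ℤ := max (-B) (min B v)

lemma clampInt_mem {B v : ℤ} (hB : 0 ≤ B) : clampInt B v ∈ Set.Icc (-B) B := by
  constructor
  · exact le_max_left _ _
  · exact max_le (by omega) (min_le_left _ _)

lemma clampInt_eq {B v : ℤ} (h : |v| ≤ B) : clampInt B v = v := by
  rw [abs_le] at h; rw [clampInt, min_eq_right h.2, max_eq_right h.1]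

lemma finite_lattice_ball {N : ℕ} (B : ℝ) :
    {z : Fin N → ℝ | z ∈ intLattice N ∧ oneNorm z ≤ B}.Finite := by
  have : {z : Fin N → ℝ | z ∈ intLattice N ∧ oneNorm z ≤ B} ⊆
      Set.range (fun m : Fin N → Set.Icc (-⌈B⌉) ⌈B⌉ => fun i => (((m i : ℤ) : ℝ))) := by
    rintro z ⟨⟨m, rfl⟩, hz⟩
    have hz' : oneNorm (fun i => ((m i : ℝ))) ≤ B := hz
    have hb : ∀ i, m i ∈ Set.Icc (-⌈B⌉) ⌈B⌉ := by
      intro i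
      have h1 : |((m i : ℝ))| ≤ B := le_trans (abs_apply_le_oneNorm (fun j => ((m j : ℝ))) i) hz'
      have h2 : ((|m i| : ℤ) : ℝ) ≤ (⌈B⌉ : ℝ) := by
        rw [Int.cast_abs]; exact le_trans h1 (Int.le_ceil B)
      rw [Set.mem_Icc]
      exact abs_le.mp (Int.cast_le.mp h2)
    exact ⟨fun i => ⟨m i, hb i⟩, rfl⟩
  exact Set.Finite.subset (Set.finite_range _) this

lemma oneNorm_zero {N : ℕ} : oneNorm (0 : Fin N → ℝ) = 0 := by simp [oneNorm]

/-- main -/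
theorem stmt16 (N : ℕ) (E F : Submodule ℝ (Fin N → ℝ)) (hEF : IsCompl E F)
    (K : Set (Fin N → ℝ)) (hKF : K ⊆ (F : Set (Fin N → ℝ)))
    (hKcompact : IsCompact K) (hKconv : Convex ℝ K)
    (π πF : (Fin N → ℝ) →ₗ[ℝ] (Fin N → ℝ))
    (hπE : ∀ x ∈ E, π x = x) (hπF : ∀ x ∈ F, π x = 0)
    (hπFF : ∀ x ∈ F, πF x = x) (hπFE : ∀ x ∈ E, πF x = 0)
    (hπinj : Set.InjOn π (intLattice N))
    (hdense : closure (πF '' intLattice N) = (F : Set (Fin N → ℝ)))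
    (S : Set (Fin N → ℝ)) (hS : S = K + (E : Set (Fin N → ℝ)))
    (Reg : ℕ → Set (Fin N → ℝ))
    (hReg : ∀ n, Reg n =
      {x ∈ S | ¬ ∃ l ∈ intLattice N, oneNorm l ≤ n ∧ x + l ∈ frontier S})
    (ppt p : ℕ → ℕ)
    (hppt : ∀ n, ppt n = Nat.card (patchSet π S K Reg n))
    (hp : ∀ n, p n = Nat.card (Quot (fun P Q : patchSet π S K Reg n =>
      ∃ t ∈ E, ((· + t) '' (P : Set (Fin N → ℝ))) = (Q : Set (Fin N → ℝ))))) :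
    (∃ M : ℕ, ∀ n : ℕ, ∀ x ∈ Reg n,
      Nat.card {y : Fin N → ℝ // y ∈ liftedPatch S n x ∧
        π '' liftedPatch S n y = π '' liftedPatch S n x} ≤ M) ∧
    (∃ lam : ℝ, 0 < lam ∧ ∀ n : ℕ,
      lam * (ppt n : ℝ) ≤ (p n : ℝ) ∧ (p n : ℝ) ≤ (ppt n : ℝ)) := by
  classical
  -- decomposition along E and F
  have hdec : ∀ v : Fin N → ℝ, π v ∈ E ∧ πF v ∈ F ∧ π v + πF v = v := by
    intro v
    have hv : v ∈ E ⊔ F := by rw [hEF.sup_eq_top]; trivial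
    obtain ⟨e, he, f, hf, hef⟩ := Submodule.mem_sup.mp hv
    have h1 : π v = e := by rw [← hef, map_add, hπE e he, hπF f hf, add_zero]
    have h2 : πF v = f := by rw [← hef, map_add, hπFE e he, hπFF f hf, zero_add]
    exact ⟨h1 ▸ he, h2 ▸ hf, by rw [h1, h2, hef]⟩
  have hSiff : ∀ z, z ∈ S ↔ πF z ∈ K := by
    intro z; rw [hS]; constructor
    · rintro ⟨k, hk, e, he, rfl⟩
      rw [map_add, hπFF k (hKF hk), hπFE e he, add_zero]; exact hk
    · intro h
      have hz : πF z + π z = z := by rw [add_comm]; exact (hdec z).2.2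
      exact hz ▸ Set.add_mem_add h (hdec z).1
  have hself : ∀ (n : ℕ) (z : Fin N → ℝ), z ∈ S → z ∈ liftedPatch S n z := by
    intro n z hz
    refine ⟨by rw [sub_self]; exact intLattice_zero, ?_, hz⟩
    rw [sub_self, oneNorm_zero]; positivity
  -- constants
  obtain ⟨CK0, hCK0⟩ := hKcompact.isBounded.exists_norm_le
  set CK := max CK0 0 with hCKdef
  have hCKnn : (0:ℝ) ≤ CK := le_max_right _ _
  have hCK : ∀ k ∈ K, ‖k‖ ≤ CK := fun k hk => le_trans (hCK0 k hk) (le_max_left _ _)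
  set CK1 := (N : ℝ) * (CK + CK) with hCK1def
  have hCK1nn : 0 ≤ CK1 := mul_nonneg (Nat.cast_nonneg _) (by linarith)
  have hKdiff : ∀ a ∈ K, ∀ b ∈ K, oneNorm (a - b) ≤ CK1 := by
    intro a ha b hb
    refine le_trans (oneNorm_le_card_norm _) ?_
    exact mul_le_mul_of_nonneg_left
      (by linarith [norm_sub_le a b, hCK a ha, hCK b hb]) (Nat.cast_nonneg N)
  set Cπ := ‖LinearMap.toContinuousLinearMap π‖ with hCπdef
  have hCπ : ∀ v, ‖π v‖ ≤ Cπ * ‖v‖ := fun v => (LinearMap.toContinuousLinearMap π).le_opNorm v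
  have hCπnn : 0 ≤ Cπ := norm_nonneg _
  set CπF := ‖LinearMap.toContinuousLinearMap πF‖ with hCπFdef
  have hCπF : ∀ v, ‖πF v‖ ≤ CπF * ‖v‖ := fun v => (LinearMap.toContinuousLinearMap πF).le_opNorm v
  have hCπFnn : 0 ≤ CπF := norm_nonneg _
  by_cases hreg : ∃ n : ℕ, ∃ x, x ∈ Reg n
  · -- non-degenerate case
    obtain ⟨n₀, x₀, hx₀⟩ := hreg
    have hRegS : ∀ (n : ℕ) (x : Fin N → ℝ), x ∈ Reg n → x ∈ S ∧ x ∉ frontier S := by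
      intro n x hx
      rw [hReg n] at hx
      refine ⟨hx.1, fun hf => hx.2 ⟨0, intLattice_zero, ?_, by rwa [add_zero]⟩⟩
      rw [oneNorm_zero]; positivity
    have hint : x₀ ∈ interior S := by
      have h := hRegS n₀ x₀ hx₀
      by_contra hn
      exact h.2 ⟨subset_closure h.1, hn⟩
    obtain ⟨ε, hε, hball⟩ := Metric.mem_nhds_iff.mp (mem_interior_iff_mem_nhds.mp hint)
    set c := πF x₀ with hc
    have hcF : c ∈ F := (hdec x₀).2.1
    have hcK : c ∈ K := (hSiff x₀).mp (hRegS n₀ x₀ hx₀).1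
    have hwin : ∀ f, f ∈ F → ‖f - c‖ < ε → f ∈ K := by
      intro f hf hfc
      have hz : x₀ + (f - c) ∈ S := by
        apply hball
        rw [Metric.mem_ball, dist_eq_norm]
        have : x₀ + (f - c) - x₀ = f - c := by abel
        rw [this]; exact hfc
      have h2 := (hSiff _).mp hz
      rw [map_add, map_sub, hπFF f hf, hπFF c hcF, ← hc] at h2
      have : c + (f - c) = f := by abel
      rwa [this] at h2
    -- finite net from density
    set C₂ := CK + CK + CπF + 1 with hC₂def
    obtain ⟨Rg, hRgnn, hnet⟩ : ∃ Rg ≥ 0, ∀ τ ∈ (F : Set (Fin N → ℝ)), ‖τ‖ ≤ C₂ →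
        ∃ l ∈ intLattice N, ‖πF l - τ‖ < ε ∧ ‖π l‖ ≤ Rg := by
      have hKb : IsCompact (Metric.closedBall (0 : Fin N → ℝ) C₂ ∩ F) :=
        (isCompact_closedBall _ _).inter_right (Submodule.closed_of_finiteDimensional F)
      have hcover : Metric.closedBall (0 : Fin N → ℝ) C₂ ∩ F ⊆
          ⋃ l ∈ intLattice N, Metric.ball (πF l) ε := by
        rintro τ ⟨-, hτF⟩
        have hτc : τ ∈ closure (πF '' intLattice N) := by rw [hdense]; exact hτF
        obtain ⟨b, ⟨l, hl, rfl⟩, hbd⟩ := Metric.mem_closure_iff.mp hτc ε hε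
        exact Set.mem_biUnion hl (Metric.mem_ball.mpr hbd)
      obtain ⟨b', hb'sub, hb'fin, hb'cov⟩ := hKb.elim_finite_subcover_image
        (fun l _ => Metric.isOpen_ball) hcover
      obtain ⟨R0, hR0⟩ := (hb'fin.image (fun l => ‖π l‖)).bddAbove
      refine ⟨max R0 0, le_max_right _ _, fun τ hτF hτn => ?_⟩
      have hτKb : τ ∈ ⋃ l ∈ b', Metric.ball (πF l) ε :=
        hb'cov ⟨Metric.mem_closedBall.mpr (by rwa [dist_zero_right]), hτF⟩
      obtain ⟨l, hlb', hlball⟩ := Set.mem_iUnion₂.mp hτKb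
      refine ⟨l, hb'sub hlb', ?_, ?_⟩
      · rw [Metric.mem_ball, dist_eq_norm] at hlball
        rwa [norm_sub_rev] at hlball
      · exact le_trans (hR0 (Set.mem_image_of_mem _ hlb')) (le_max_left _ _)
    -- relative denseness
    set Rd := (N:ℝ) * Cπ + (N:ℝ) * Rg with hRddef
    have hRdnn : 0 ≤ Rd := by positivity
    have hrd : ∀ w ∈ K, ∀ u, u ∈ E → ∃ l ∈ intLattice N,
        (w + πF l ∈ K) ∧ oneNorm (π l - u) ≤ Rd := by
      intro w hw u hu
      set l₀ : Fin N → ℝ := fun i => ((round (u i) : ℤ) : ℝ) with hl₀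
      have hl₀lat : l₀ ∈ intLattice N := ⟨fun i => round (u i), rfl⟩
      have hl₀u : ‖l₀ - u‖ ≤ 1 := by
        apply (pi_norm_le_iff_of_nonneg (by norm_num)).mpr
        intro i
        have h1 : (l₀ - u) i = ((round (u i) : ℤ) : ℝ) - u i := rfl
        rw [Real.norm_eq_abs, h1, abs_sub_comm]
        exact le_trans (abs_sub_round (u i)) (by norm_num)
      have hπFu : πF u = 0 := hπFE u hu
      have hπu : π u = u := hπE u hu
      have hπFl₀ : ‖πF l₀‖ ≤ CπF := by
        have h2 : πF l₀ = πF (l₀ - u) := by rw [map_sub, hπFu, sub_zero]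
        rw [h2]
        refine le_trans (hCπF _) ?_
        calc CπF * ‖l₀ - u‖ ≤ CπF * 1 := mul_le_mul_of_nonneg_left hl₀u hCπFnn
          _ = CπF := mul_one _
      have hτF : c - w - πF l₀ ∈ F := F.sub_mem (F.sub_mem hcF (hKF hw)) (hdec l₀).2.1
      have hτn : ‖c - w - πF l₀‖ ≤ C₂ := by
        calc ‖c - w - πF l₀‖ ≤ ‖c - w‖ + ‖πF l₀‖ := norm_sub_le _ _
          _ ≤ (‖c‖ + ‖w‖) + CπF := add_le_add (norm_sub_le _ _) hπFl₀
          _ ≤ C₂ := by rw [hC₂def]; linarith [hCK c hcK, hCK w hw]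
      obtain ⟨g, hglat, hgτ, hgπ⟩ := hnet _ hτF hτn
      refine ⟨l₀ + g, intLattice_add hl₀lat hglat, ?_, ?_⟩
      · refine hwin _ (F.add_mem (hKF hw) (hdec _).2.1) ?_
        rw [map_add]
        have h3 : w + (πF l₀ + πF g) - c = πF g - (c - w - πF l₀) := by abel
        rw [h3]; exact hgτ
      · have h4 : π (l₀ + g) - u = π (l₀ - u) + π g := by
          rw [map_add, map_sub, hπu]; abel
        rw [h4]
        calc oneNorm (π (l₀ - u) + π g) ≤ oneNorm (π (l₀ - u)) + oneNorm (π g) :=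
              oneNorm_add_le _ _
          _ ≤ (N:ℝ) * ‖π (l₀ - u)‖ + (N:ℝ) * ‖π g‖ :=
              add_le_add (oneNorm_le_card_norm _) (oneNorm_le_card_norm _)
          _ ≤ Rd := by
              rw [hRddef]
              have h5 : ‖π (l₀ - u)‖ ≤ Cπ := by
                refine le_trans (hCπ _) ?_
                calc Cπ * ‖l₀ - u‖ ≤ Cπ * 1 := mul_le_mul_of_nonneg_left hl₀u hCπnn
                  _ = Cπ := mul_one _
              have h6 := mul_le_mul_of_nonneg_left h5 (Nat.cast_nonneg N : (0:ℝ) ≤ N)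
              have h7 := mul_le_mul_of_nonneg_left hgπ (Nat.cast_nonneg N : (0:ℝ) ≤ N)
              linarith
    -- master lemma
    set ρ := 2*Rd + 2*CK1 with hρdef
    have hρnn : 0 ≤ ρ := by positivity
    have hmaster : ∀ (n : ℕ) (x : Fin N → ℝ), x ∈ S → ∀ x' ∈ S, ∀ t, t ∈ E →
        π '' liftedPatch S n x' = (fun z => z + t) '' (π '' liftedPatch S n x) →
        oneNorm (π x' - π x - t) ≤ ρ := by
      intro n x hx x' hx' t ht heq
      set v := π x' - π x - t with hv
      have hvE : v ∈ E := E.sub_mem (E.sub_mem (hdec x').1 (hdec x).1) ht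
      have hQ : ∀ q ∈ liftedPatch S n x, oneNorm (π (q - x)) ≤ (n:ℝ) + CK1 := by
        intro q hq
        obtain ⟨h1, h2, h3⟩ := hq
        have h4 : π (q - x) = (q - x) - πF (q - x) := (eq_sub_of_add_eq (hdec (q - x)).2.2)
        rw [h4]
        refine le_trans (oneNorm_sub_le _ _) (add_le_add h2 ?_)
        rw [map_sub]
        exact hKdiff _ ((hSiff q).mp h3) _ ((hSiff x).mp hx)
      rcases le_or_gt (oneNorm v) ρ with hle | hgt
      · exact hle
      exfalso
      have hvpos : 0 < oneNorm v := lt_of_le_of_lt hρnn hgt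
      rcases lt_or_ge ((n : ℝ)) (Rd + CK1) with hn | hn
      · -- small n
        have hx'mem : π x' ∈ π '' liftedPatch S n x' := ⟨x', hself n x' hx', rfl⟩
        rw [heq] at hx'mem
        obtain ⟨z, ⟨q, hq, rfl⟩, hzt⟩ := hx'mem
        have hveq : v = π (q - x) := by rw [hv, ← hzt, map_sub]; beta_reduce; abel
        have h8 := hQ q hq
        rw [← hveq] at h8
        rw [hρdef] at hgt
        linarith
      · -- large n
        set a := oneNorm v with ha
        set β := ((n : ℝ) - Rd - CK1) / a with hβ
        have hβnn : 0 ≤ β := div_nonneg (by linarith) (le_of_lt hvpos)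
        set u := β • v with hu
        have huE : u ∈ E := E.smul_mem _ hvE
        have hunorm : oneNorm u = (n : ℝ) - Rd - CK1 := by
          rw [hu, oneNorm_smul, abs_of_nonneg hβnn, hβ, div_mul_cancel₀ _ (ne_of_gt hvpos)]
        obtain ⟨l, hllat, hlK, hlu⟩ := hrd (πF x') ((hSiff x').mp hx') u huE
        have hπFl : oneNorm (πF l) ≤ CK1 := by
          have h9 : πF l = (πF x' + πF l) - πF x' := by abel
          rw [h9]; exact hKdiff _ hlK _ ((hSiff x').mp hx')
        have hπl : oneNorm (π l) ≤ (n : ℝ) - CK1 := by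
          have h10 : π l = (π l - u) + u := by abel
          rw [h10]
          refine le_trans (oneNorm_add_le _ _) ?_
          rw [hunorm]; linarith
        have hpmem : x' + l ∈ liftedPatch S n x' := by
          refine ⟨?_, ?_, (hSiff _).mpr (by rw [map_add]; exact hlK)⟩
          · have h11 : x' + l - x' = l := by abel
            rw [h11]; exact hllat
          · have h11 : x' + l - x' = l := by abel
            rw [h11]
            have h12 := (hdec l).2.2
            calc oneNorm l = oneNorm (π l + πF l) := by rw [h12]
              _ ≤ oneNorm (π l) + oneNorm (πF l) := oneNorm_add_le _ _
              _ ≤ (n:ℝ) := by linarith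
        have hppatch : π (x' + l) ∈ π '' liftedPatch S n x' := ⟨_, hpmem, rfl⟩
        rw [heq] at hppatch
        obtain ⟨z, ⟨q, hq, rfl⟩, hzt⟩ := hppatch
        have hkey : π (q - x) = v + π l := by
          rw [map_add] at hzt
          rw [map_sub, eq_sub_of_add_eq hzt, hv]; abel
        have hup : oneNorm (v + u) = a + ((n:ℝ) - Rd - CK1) := by
          have h13 : v + u = (1 + β) • v := by rw [hu, add_smul, one_smul]
          rw [h13, oneNorm_smul, abs_of_nonneg (by linarith), add_mul, one_mul, hβ,
            div_mul_cancel₀ _ (ne_of_gt hvpos)]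
        have hlow : a + ((n:ℝ) - Rd - CK1) ≤ oneNorm (π (q - x)) + Rd := by
          have hsplit : v + u = π (q - x) + (u - π l) := by rw [hkey]; abel
          have h14 := oneNorm_add_le (π (q - x)) (u - π l)
          rw [← hsplit, hup] at h14
          have h15 : oneNorm (u - π l) ≤ Rd := by
            rw [← oneNorm_neg, neg_sub]; exact hlu
          linarith
        have hupper := hQ q hq
        rw [hρdef] at hgt
        linarith
    -- the uniform bound
    set B0 := ρ + CK1 with hB0def
    have hB0nn : 0 ≤ B0 := by positivity
    set B : ℤ := ⌈B0⌉ with hBdef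
    have hBnn : (0:ℤ) ≤ B := Int.ceil_nonneg hB0nn
    have hoffB : ∀ l : Fin N → ℝ, l ∈ intLattice N → oneNorm (π l) ≤ ρ →
        oneNorm (πF l) ≤ CK1 → ∀ i, |latCoord l i| ≤ B := by
      intro l hl h1 h2 i
      have h3 : oneNorm l ≤ B0 := by
        have h12 := (hdec l).2.2
        calc oneNorm l = oneNorm (π l + πF l) := by rw [h12]
          _ ≤ oneNorm (π l) + oneNorm (πF l) := oneNorm_add_le _ _
          _ ≤ B0 := by rw [hB0def]; linarith
      have h4 : (fun i => ((latCoord l i : ℝ))) = l := latCoord_spec hl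
      have h5 : |((latCoord l i : ℝ))| ≤ B0 := by
        have h4' : ((latCoord l i : ℝ)) = l i := congrFun h4 i
        rw [h4']
        exact le_trans (abs_apply_le_oneNorm l i) h3
      have h6 : ((|latCoord l i| : ℤ) : ℝ) ≤ (B : ℝ) := by
        rw [Int.cast_abs]
        exact le_trans h5 (le_trans (Int.le_ceil B0) (by rw [hBdef]))
      exact_mod_cast h6
    refine ⟨⟨Nat.card (Fin N → (Set.Icc (-B) B)), fun n x hx => ?_⟩, ?_⟩
    · -- bounded number of centers
      have hxS : x ∈ S := (hRegS n x hx).1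
      have hcen : ∀ y : {y : Fin N → ℝ // y ∈ liftedPatch S n x ∧
          π '' liftedPatch S n y = π '' liftedPatch S n x}, ∀ i,
          |latCoord (y.1 - x) i| ≤ B := by
        rintro ⟨y, hy1, hy2⟩ i
        obtain ⟨hl, hn', hyS⟩ := hy1
        have heq : π '' liftedPatch S n y = (fun z => z + (0 : Fin N → ℝ)) ''
            (π '' liftedPatch S n x) := by
          rw [show (fun z : Fin N → ℝ => z + 0) = id from funext fun z => add_zero z,
            Set.image_id]
          exact hy2
        have hmb := hmaster n x hxS y hyS 0 (zero_mem E) heq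
        rw [sub_zero] at hmb
        have hπb : oneNorm (π (y - x)) ≤ ρ := by rw [map_sub]; exact hmb
        have hπFb : oneNorm (πF (y - x)) ≤ CK1 := by
          rw [map_sub]
          exact hKdiff _ ((hSiff y).mp hyS) _ ((hSiff x).mp hxS)
        exact hoffB _ hl hπb hπFb i
      refine Nat.card_le_card_of_injective
        (fun y => fun i => (⟨clampInt B (latCoord (y.1 - x) i), clampInt_mem hBnn⟩ :
          Set.Icc (-B) B)) ?_
      intro y y' hf
      have hmm : latCoord (y.1 - x) = latCoord (y'.1 - x) := by
        funext i
        have h16 := congrArg Subtype.val (congrFun hf i)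
        simp only at h16
        rwa [clampInt_eq (hcen y i), clampInt_eq (hcen y' i)] at h16
      have h17 : y.1 - x = y'.1 - x := by
        rw [← latCoord_spec y.2.1.1, ← latCoord_spec y'.2.1.1, hmm]
      exact Subtype.ext (sub_left_inj.mp h17)
    · -- complexity comparison
      haveI : Nonempty (Set.Icc (-B) B) :=
        ⟨⟨0, Set.mem_Icc.mpr ⟨neg_nonpos.mpr hBnn, hBnn⟩⟩⟩
      have hMpos : 0 < Nat.card (Fin N → (Set.Icc (-B) B)) := Nat.card_pos
      refine ⟨(Nat.card (Fin N → (Set.Icc (-B) B)) : ℝ)⁻¹,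
        inv_pos.mpr (by exact_mod_cast hMpos), fun n => ?_⟩
      set r := fun P Q : patchSet π S K Reg n =>
        ∃ t ∈ E, ((· + t) '' (P : Set (Fin N → ℝ))) = (Q : Set (Fin N → ℝ)) with hr
      -- finiteness of patch set
      have hpfin : (patchSet π S K Reg n).Finite := by
        refine Set.Finite.subset
          (((finite_lattice_ball (N := N) (n : ℝ)).image π).finite_subsets) ?_
        rintro P ⟨x, hxKR, rfl⟩
        rintro w ⟨y, ⟨hy1, hy2, hy3⟩, rfl⟩
        have hπx : π x = 0 := hπF x (hKF hxKR.1)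
        have h18 : π y = π (y - x) := by rw [map_sub, hπx, sub_zero]
        exact ⟨y - x, ⟨hy1, hy2⟩, h18.symm⟩
      haveI : Finite (patchSet π S K Reg n) := hpfin.to_subtype
      -- r is an equivalence
      have hrequiv : Equivalence r := by
        constructor
        · intro P
          refine ⟨0, zero_mem E, ?_⟩
          rw [show (fun z : Fin N → ℝ => z + 0) = id from funext fun z => add_zero z,
            Set.image_id]
        · rintro P Q ⟨t, ht, himg⟩
          refine ⟨-t, neg_mem ht, ?_⟩
          rw [← himg, ← Set.image_comp]
          rw [show ((fun z : Fin N → ℝ => z + -t) ∘ (fun z => z + t)) = id from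
            funext fun z => by simp, Set.image_id]
        · rintro P Q Rq ⟨t, ht, h1⟩ ⟨t', ht', h2⟩
          refine ⟨t + t', add_mem ht ht', ?_⟩
          rw [← h2, ← h1, ← Set.image_comp]
          rw [show (fun x : Fin N → ℝ => x + (t + t')) =
            ((fun x => x + t') ∘ fun x => x + t) from
            funext fun z => by simp [add_assoc]]
      haveI : Finite (Quot r) := Finite.of_surjective (Quot.mk r) (fun q => q.exists_rep)
      -- key: each pointed patch is a bounded translate of its class representative
      have hkey : ∀ P : patchSet π S K Reg n, ∃ mm : Fin N → ℤ,
          ((fun z => z + π (fun i => ((mm i : ℝ)))) ''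
            (((Quot.mk r P).out : patchSet π S K Reg n) : Set (Fin N → ℝ)))
            = (P : Set (Fin N → ℝ)) ∧ ∀ i, |mm i| ≤ B := by
        intro P
        set R0 := (Quot.mk r P).out with hR0def
        have hout : Quot.mk r R0 = Quot.mk r P := Quot.out_eq _
        have hrel : r R0 P := (hrequiv.eqvGen_iff).mp (Quot.eq.mp hout)
        obtain ⟨t, htE, himg⟩ := hrel
        obtain ⟨xP, hxPK, hPeq⟩ := P.2
        obtain ⟨x0, hx0K, hR0eq⟩ := R0.2
        have hx0S : x0 ∈ S := (hRegS n x0 hx0K.2).1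
        have hxPS : xP ∈ S := (hRegS n xP hxPK.2).1
        have hπxP : π xP = 0 := hπF xP (hKF hxPK.1)
        have hπx0 : π x0 = 0 := hπF x0 (hKF hx0K.1)
        have heq2 : π '' liftedPatch S n xP =
            (fun z => z + t) '' (π '' liftedPatch S n x0) := by
          rw [← hPeq, ← hR0eq]; exact himg.symm
        have hmb := hmaster n x0 hx0S xP hxPS t htE heq2
        rw [hπxP, hπx0] at hmb
        have htρ : oneNorm t ≤ ρ := by
          have h19 : (0:Fin N → ℝ) - 0 - t = -t := by abel
          rwa [h19, oneNorm_neg] at hmb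
        have h0R : (0:Fin N → ℝ) ∈ (R0 : Set (Fin N → ℝ)) := by
          rw [hR0eq]; exact ⟨x0, hself n x0 hx0S, hπx0⟩
        have htP : t ∈ (P : Set (Fin N → ℝ)) := by
          rw [← himg]; exact ⟨0, h0R, zero_add t⟩
        rw [hPeq] at htP
        obtain ⟨y, hy, hyt⟩ := htP
        obtain ⟨hy1, hy2, hy3⟩ := hy
        have hπlt : π (y - xP) = t := by rw [map_sub, hπxP, sub_zero, hyt]
        have hπlρ : oneNorm (π (y - xP)) ≤ ρ := by rw [hπlt]; exact htρ
        have hπFl : oneNorm (πF (y - xP)) ≤ CK1 := by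
          rw [map_sub]; exact hKdiff _ ((hSiff y).mp hy3) _ ((hSiff xP).mp hxPS)
        refine ⟨latCoord (y - xP), ?_, hoffB _ hy1 hπlρ hπFl⟩
        rw [latCoord_spec hy1, hπlt]
        exact himg
      -- injection into Quot r × bounded coordinates
      have hφinj : Function.Injective (fun P : patchSet π S K Reg n =>
          (Quot.mk r P, fun i => (⟨clampInt B ((hkey P).choose i), clampInt_mem hBnn⟩ :
            Set.Icc (-B) B))) := by
        intro P Q h
        have h1 : Quot.mk r P = Quot.mk r Q := (Prod.ext_iff.mp h).1
        have h2 := (Prod.ext_iff.mp h).2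
        obtain ⟨hPimg, hPb⟩ := (hkey P).choose_spec
        obtain ⟨hQimg, hQb⟩ := (hkey Q).choose_spec
        have hmm : (hkey P).choose = (hkey Q).choose := by
          funext i
          have h20 := congrArg Subtype.val (congrFun h2 i)
          simp only at h20
          rwa [clampInt_eq (hPb i), clampInt_eq (hQb i)] at h20
        apply Subtype.ext
        rw [← hPimg, ← hQimg, hmm, h1]
      have hcard := Nat.card_le_card_of_injective _ hφinj
      rw [Nat.card_prod] at hcard
      have hpn : p n = Nat.card (Quot r) := hp n
      have hpptn : ppt n = Nat.card (patchSet π S K Reg n) := hppt n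
      constructor
      · rw [inv_mul_le_iff₀ (by exact_mod_cast hMpos)]
        rw [hpn, hpptn]
        have : Nat.card (patchSet π S K Reg n) ≤
            Nat.card (Fin N → (Set.Icc (-B) B)) * Nat.card (Quot r) := by
          rw [mul_comm]; exact hcard
        exact_mod_cast this
      · rw [hpn, hpptn]
        have := Nat.card_le_card_of_surjective (Quot.mk r) (fun q => q.exists_rep)
        exact_mod_cast this
  · -- degenerate case: no regular points at all
    push_neg at hreg
    refine ⟨⟨0, fun n x hx => absurd hx (hreg n x)⟩, 1, one_pos, fun n => ?_⟩
    have hemp : IsEmpty (patchSet π S K Reg n) := by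
      rw [Set.isEmpty_coe_sort]
      rw [Set.eq_empty_iff_forall_notMem]
      rintro P ⟨x, hxKR, -⟩
      exact hreg n x hxKR.2
    haveI := hemp
    haveI : IsEmpty (Quot (fun P Q : patchSet π S K Reg n =>
        ∃ t ∈ E, ((· + t) '' (P : Set (Fin N → ℝ))) = (Q : Set (Fin N → ℝ)))) := by
      refine ⟨fun q => ?_⟩
      obtain ⟨a, -⟩ := q.exists_rep
      exact hemp.false a
    rw [hppt n, hp n]
    simp [Nat.card_of_isEmpty]
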